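/- arXiv:1807.06341 — 3 statements merged into one kernel-verified Lean document; each statement's English description precedes it below -/
import Mathlib

section
/- Assume the Framework with Ω = 𝔻, the open unit disk, and suppose the shift operator satisfies ‖S‖ ≤ 1. If (w_j)_{j ≥ 1} ⊂ 𝔻 ∖ {0} is a sequence for which there exists g ∈ H ∖ {0} with ι g vanishing at each w (w ∈ 𝔻) to order at least #{j : w_j = w}, and if (v_i)_{i ≥ 1} ⊂ 𝔻 ∖ {0} satisfies the Blaschke condition ∑_{i ≥ 1} (1 − |v_i|) < ∞, then there exists h ∈ H ∖ {0} such that for every w ∈ 𝔻 the function ι h vanishes at w to order at least #{j : w_j = w} + #{i : v_i = w}; that is, the union of a zero set for H with a Blaschke sequence is again a zero set for H. -/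
open scoped ComplexInnerProductSpace

/-- A Hilbert space `H` of analytic functions on a bounded domain `Ω ⊆ ℂ` with `0 ∈ Ω`,
realized by an injective linear map `ι` into functions, satisfying conditions
(P1)–(P4) of Cheng–Mashreghi–Ross, together with its reproducing kernels. -/
structure RKFramework (Ω : Set ℂ) (H : Type*) [NormedAddCommGroup H]
    [InnerProductSpace ℂ H] [CompleteSpace H] where
  /-- `Ω` is open. -/
  isOpen : IsOpen Ω
  /-- `Ω` is connected. -/
  isConnected : IsConnected Ω
  /-- `Ω` is bounded. -/
  isBounded : Bornology.IsBounded Ω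
  /-- `0 ∈ Ω`. -/
  zero_mem : (0 : ℂ) ∈ Ω
  /-- the realization of elements of `H` as functions (only values on `Ω` matter). -/
  ι : H →ₗ[ℂ] (ℂ → ℂ)
  /-- `ι` is injective as a map into functions on `Ω`. -/
  ι_inj : ∀ f g : H, Set.EqOn (ι f) (ι g) Ω → f = g
  /-- each `ι f` is analytic on `Ω`. -/
  analytic : ∀ f : H, DifferentiableOn ℂ (ι f) Ω
  /-- (P1): point evaluation of every derivative is a bounded functional. -/
  eval_bounded : ∀ w ∈ Ω, ∀ j : ℕ, ∃ C : ℝ, ∀ f : H,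
    ‖iteratedDerivWithin j (ι f) Ω w‖ ≤ C * ‖f‖
  /-- (P2): the shift operator `S`. -/
  S : H →L[ℂ] H
  ι_S : ∀ f : H, ∀ z ∈ Ω, ι (S f) z = z * ι f z
  /-- (P3): the monomials `z^j` belong to `H` … -/
  p : ℕ → H
  ι_p : ∀ j : ℕ, ∀ z ∈ Ω, ι (p j) z = z ^ j
  /-- … and the polynomials are dense in `H`. -/
  span_p : (Submodule.span ℂ (Set.range p)).topologicalClosure = ⊤
  /-- (P4): the difference-quotient operators `Q_w`. -/
  Q : ℂ → H →L[ℂ] H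
  ι_Q : ∀ w ∈ Ω, ∀ f : H, ∀ z ∈ Ω, z ≠ w → ι (Q w f) z = (ι f z - ι f w) / (z - w)
  /-- the reproducing kernel `k_w` at `w ∈ Ω` … -/
  k : ℂ → H
  /-- … satisfying `⟪f, k_w⟫ = (ι f)(w)` (with the paper's inner product linear in its
  first slot; Mathlib's inner product is linear in the second slot). -/
  reproducing : ∀ w ∈ Ω, ∀ f : H, ⟪k w, f⟫ = ι f w

variable {Ω : Set ℂ} {H : Type*} [NormedAddCommGroup H] [InnerProductSpace ℂ H] [CompleteSpace H]

/-- `[zf]`: the closed linear span of `{S^n f : n ≥ 1}`. -/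
abbrev RKFramework.zspan (F : RKFramework Ω H) (f : H) : Submodule ℂ H :=
  (Submodule.span ℂ {x | ∃ n : ℕ, 1 ≤ n ∧ x = (F.S ^ n) f}).topologicalClosure

/-- `[f]`: the closed linear span of `{S^n f : n ≥ 0}`. -/
abbrev RKFramework.fullSpan (F : RKFramework Ω H) (f : H) : Submodule ℂ H :=
  (Submodule.span ℂ (Set.range fun n : ℕ => (F.S ^ n) f)).topologicalClosure

/-- The `S`-inner function `J = f − P_{[zf]} f` associated with `f`. -/
noncomputable def RKFramework.J (F : RKFramework Ω H) (f : H) : H :=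
  f - ((F.zspan f).orthogonalProjection f : H)


open Filter Topology Set

-- coefficient / iterated derivative link
lemma coeff_eq_iteratedDeriv {f : ℂ → ℂ} {p : FormalMultilinearSeries ℂ ℂ ℂ} {z₀ : ℂ}
    (hp : HasFPowerSeriesAt f p z₀) (n : ℕ) :
    (Nat.factorial n : ℂ) * p.coeff n = iteratedDeriv n f z₀ := by
  obtain ⟨r, hr⟩ := hp
  have := hr.factorial_smul (1 : ℂ) n
  rw [iteratedDeriv_eq_iteratedFDeriv, ← this, nsmul_eq_mul]
  rfl

-- factorization from vanishing coefficients
lemma exists_factor_of_coeff_eq_zero {z₀ : ℂ} (m : ℕ) :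
    ∀ {f : ℂ → ℂ} {p : FormalMultilinearSeries ℂ ℂ ℂ}, HasFPowerSeriesAt f p z₀ →
    (∀ s < m, p.coeff s = 0) →
    ∃ u : ℂ → ℂ, AnalyticAt ℂ u z₀ ∧ ∀ z, f z = (z - z₀) ^ m * u z := by
  induction m with
  | zero => exact fun hp _ => ⟨_, ⟨_, hp⟩, fun z => by simp⟩
  | succ m ih =>
    intro f p hp hc
    have hf0 : f z₀ = 0 := by
      have h0 : p.coeff 0 = f z₀ := hp.coeff_zero 1
      rw [hc 0 (Nat.succ_pos m)] at h0; exact h0.symm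
    have hd : HasFPowerSeriesAt (dslope f z₀) p.fslope z₀ :=
      hp.has_fpower_series_dslope_fslope
    have hc' : ∀ s < m, p.fslope.coeff s = 0 := fun s hs => by
      rw [p.coeff_fslope]; exact hc (s + 1) (by omega)
    obtain ⟨u, hu, hfu⟩ := ih hd hc'
    refine ⟨u, hu, fun z => ?_⟩
    have := sub_smul_dslope f z₀ z
    rw [hf0, sub_zero] at this
    rw [← this, smul_eq_mul, hfu z]; ring

-- coefficients vanish from a punctured big-O bound
lemma coeff_eq_zero_of_bound {z₀ : ℂ} (m : ℕ) :
    ∀ {f : ℂ → ℂ} {p : FormalMultilinearSeries ℂ ℂ ℂ} {C : ℝ}, HasFPowerSeriesAt f p z₀ →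
    (∀ᶠ z in 𝓝[≠] z₀, ‖f z‖ ≤ C * ‖z - z₀‖ ^ m) →
    ∀ s < m, p.coeff s = 0 := by
  induction m with
  | zero => exact fun _ _ s hs => absurd hs (Nat.not_lt_zero s)
  | succ m ih =>
    intro f p C hp hb
    have hf0 : f z₀ = 0 := by
      have h1 : Tendsto f (𝓝[≠] z₀) (𝓝 0) := by
        apply squeeze_zero_norm' hb
        have : Tendsto (fun z : ℂ => C * ‖z - z₀‖ ^ (m+1)) (𝓝 z₀) (𝓝 (C * ‖z₀ - z₀‖ ^ (m+1))) :=
          (continuous_const.mul (((continuous_id.sub continuous_const).norm).pow (m+1))).tendsto z₀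
        simp only [sub_self, norm_zero, zero_pow (Nat.succ_ne_zero m), mul_zero] at this
        exact this.mono_left nhdsWithin_le_nhds
      have h2 : Tendsto f (𝓝[≠] z₀) (𝓝 (f z₀)) :=
        (hp.analyticAt.continuousAt.tendsto).mono_left nhdsWithin_le_nhds
      exact tendsto_nhds_unique h2 h1
    have hc0 : p.coeff 0 = 0 := by
      have h0 : p.coeff 0 = f z₀ := hp.coeff_zero 1
      rw [h0, hf0]
    have hd : HasFPowerSeriesAt (dslope f z₀) p.fslope z₀ :=
      hp.has_fpower_series_dslope_fslope
    have hb' : ∀ᶠ z in 𝓝[≠] z₀, ‖dslope f z₀ z‖ ≤ C * ‖z - z₀‖ ^ m := by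
      filter_upwards [hb, self_mem_nhdsWithin] with z hz hz'
      have hzz : z - z₀ ≠ 0 := sub_ne_zero.mpr hz'
      rw [dslope_of_ne f hz', slope_def_field, hf0, sub_zero, div_eq_mul_inv]
      rw [norm_mul, norm_inv]
      calc ‖f z‖ * ‖z - z₀‖⁻¹ ≤ (C * ‖z - z₀‖ ^ (m+1)) * ‖z - z₀‖⁻¹ := by
            gcongr
          _ = C * ‖z - z₀‖ ^ m := by
            have ha : ‖z - z₀‖ ≠ 0 := norm_ne_zero_iff.mpr hzz
            have ha' : ‖z - z₀‖ ≠ 0 := ha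
            rw [pow_succ]
            field_simp [ha']
    intro s hs
    rcases Nat.eq_zero_or_pos s with rfl | hs'
    · exact hc0
    · obtain ⟨t, rfl⟩ := Nat.exists_eq_succ_of_ne_zero (Nat.pos_iff_ne_zero.mp hs')
      have := ih hd hb' t (by omega)
      rwa [p.coeff_fslope] at this

open Filter Topology Set Finset

lemma prod_convergence {a : ℕ → ℂ} (h : Summable fun i => ‖a i - 1‖) :
    ∃ P : ℂ, Tendsto (fun n => ∏ i ∈ Finset.range n, a i) atTop (𝓝 P) ∧
      ((∀ i, a i ≠ 0) → P ≠ 0) := by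
  have h0 : Tendsto (fun i => ‖a i - 1‖) atTop (𝓝 0) := h.tendsto_atTop_zero
  obtain ⟨N, hN⟩ : ∃ N, ∀ i ≥ N, ‖a i - 1‖ ≤ 1/2 :=
    eventually_atTop.mp (h0.eventually (eventually_le_nhds (by norm_num : (0:ℝ) < 1/2)))
  have hne : ∀ i ≥ N, a i ≠ 0 := by
    intro i hi h0'
    have := hN i hi
    rw [h0'] at this; norm_num at this
  set l : ℕ → ℂ := fun k => Complex.log (a (k + N)) with hl
  have hbound : ∀ k, ‖l k‖ ≤ (3/2) * ‖a (k + N) - 1‖ := by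
    intro k
    have h2 : ‖a (k + N) - 1‖ ≤ 1/2 := hN _ (Nat.le_add_left N k)
    have := Complex.norm_log_one_add_half_le_self h2
    simpa using this
  have hsum : Summable fun k => ‖a (k + N) - 1‖ := (summable_nat_add_iff N).mpr h
  have hsl : Summable l :=
    Summable.of_norm (Summable.of_nonneg_of_le (fun _ => norm_nonneg _) hbound
      (hsum.mul_left (3/2)))
  have hexp : ∀ k, Complex.exp (l k) = a (k + N) :=
    fun k => Complex.exp_log (hne _ (Nat.le_add_left N k))
  have hT : Tendsto (fun n => ∑ i ∈ Finset.range n, l i) atTop (𝓝 (∑' k, l k)) :=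
    hsl.hasSum.tendsto_sum_nat
  set c : ℂ := ∏ i ∈ Finset.range N, a i with hc
  refine ⟨c * Complex.exp (∑' k, l k), ?_, ?_⟩
  · have h1 : Tendsto (fun n => c * Complex.exp (∑ i ∈ Finset.range (n - N), l i)) atTop
        (𝓝 (c * Complex.exp (∑' k, l k))) :=
      (tendsto_const_nhds.mul ((Complex.continuous_exp.tendsto _).comp
        (hT.comp (tendsto_sub_atTop_nat N))))
    refine h1.congr' ?_
    filter_upwards [eventually_ge_atTop N] with n hn
    have hsplit : ∏ i ∈ Finset.range n, a i
        = (∏ i ∈ Finset.range N, a i) * ∏ i ∈ Finset.range (n - N), a (N + i) := by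
      have hn' : N + (n - N) = n := Nat.add_sub_cancel' hn
      rw [← hn', Finset.prod_range_add]
      simp
    rw [hsplit, Complex.exp_sum]
    congr 1
    exact Finset.prod_congr rfl fun i _ => by rw [hexp i, Nat.add_comm]
  · intro hall
    refine mul_ne_zero ?_ (Complex.exp_ne_zero _)
    exact Finset.prod_ne_zero_iff.mpr fun i _ => hall i

open Filter Topology Set

noncomputable def bl (v z : ℂ) : ℂ :=
  ((starRingEnd ℂ) v / (‖v‖ : ℂ)) * ((v - z) / (1 - (starRingEnd ℂ) v * z))

lemma bl_den_norm {v z : ℂ} (hv : ‖v‖ ≤ 1) (hz : ‖z‖ < 1) :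
    1 - ‖z‖ ≤ ‖1 - (starRingEnd ℂ) v * z‖ := by
  have h1 : ‖(starRingEnd ℂ) v * z‖ ≤ ‖z‖ := by
    rw [norm_mul, RCLike.norm_conj]
    nlinarith [norm_nonneg z]
  calc 1 - ‖z‖ ≤ ‖(1 : ℂ)‖ - ‖(starRingEnd ℂ) v * z‖ := by rw [norm_one]; linarith
    _ ≤ ‖1 - (starRingEnd ℂ) v * z‖ := norm_sub_norm_le _ _

lemma bl_den_ne_zero {v z : ℂ} (hv : ‖v‖ ≤ 1) (hz : ‖z‖ < 1) :
    1 - (starRingEnd ℂ) v * z ≠ 0 := by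
  intro h
  have := bl_den_norm hv hz
  rw [h, norm_zero] at this
  linarith

lemma normSq_den_sub_normSq_num (v z : ℂ) :
    Complex.normSq (1 - (starRingEnd ℂ) v * z) - Complex.normSq (v - z)
      = (1 - Complex.normSq v) * (1 - Complex.normSq z) := by
  simp only [Complex.normSq_apply, Complex.mul_re, Complex.mul_im, Complex.sub_re,
    Complex.sub_im, Complex.one_re, Complex.one_im, Complex.conj_re, Complex.conj_im]
  ring

lemma bl_num_le_den {v z : ℂ} (hv : ‖v‖ ≤ 1) (hz : ‖z‖ ≤ 1) :
    ‖v - z‖ ≤ ‖1 - (starRingEnd ℂ) v * z‖ := by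
  have h1 := normSq_den_sub_normSq_num v z
  have h2 : Complex.normSq v ≤ 1 := by
    rw [← Complex.sq_norm]; nlinarith [norm_nonneg v]
  have h3 : Complex.normSq z ≤ 1 := by
    rw [← Complex.sq_norm]; nlinarith [norm_nonneg z]
  have h4 : Complex.normSq (v - z) ≤ Complex.normSq (1 - (starRingEnd ℂ) v * z) := by nlinarith
  rw [← sq_le_sq₀ (norm_nonneg _) (norm_nonneg _), Complex.sq_norm, Complex.sq_norm]
  exact h4

lemma bl_norm_le_one {v z : ℂ} (hv0 : v ≠ 0) (hv : ‖v‖ ≤ 1) (hz : ‖z‖ < 1) :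
    ‖bl v z‖ ≤ 1 := by
  have hc : ‖(starRingEnd ℂ) v / (‖v‖ : ℂ)‖ = 1 := by
    rw [norm_div, RCLike.norm_conj]
    simp [hv0]
  rw [bl, norm_mul, hc, one_mul, norm_div]
  rw [div_le_one (by have := bl_den_norm hv hz; linarith)]
  exact bl_num_le_den hv hz.le

lemma bl_norm_le {v z : ℂ} (hv0 : v ≠ 0) (hv : ‖v‖ ≤ 1) (hz : ‖z‖ < 1) :
    ‖bl v z‖ ≤ ‖v - z‖ / (1 - ‖z‖) := by
  have hc : ‖(starRingEnd ℂ) v / (‖v‖ : ℂ)‖ = 1 := by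
    rw [norm_div, RCLike.norm_conj]
    simp [hv0]
  rw [bl, norm_mul, hc, one_mul, norm_div]
  have hden := bl_den_norm hv hz
  have hz1 : (0:ℝ) < 1 - ‖z‖ := by linarith
  exact div_le_div_of_nonneg_left (norm_nonneg _) hz1 hden

lemma bl_den_norm' {v z : ℂ} (hv : ‖v‖ < 1) (hz : ‖z‖ ≤ 1) :
    1 - ‖v‖ ≤ ‖1 - (starRingEnd ℂ) v * z‖ := by
  have h1 : ‖(starRingEnd ℂ) v * z‖ ≤ ‖v‖ := by
    rw [norm_mul, RCLike.norm_conj]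
    nlinarith [norm_nonneg v, norm_nonneg z]
  calc 1 - ‖v‖ ≤ ‖(1 : ℂ)‖ - ‖(starRingEnd ℂ) v * z‖ := by rw [norm_one]; linarith
    _ ≤ ‖1 - (starRingEnd ℂ) v * z‖ := norm_sub_norm_le _ _

lemma bl_norm_le' {v z : ℂ} (hv0 : v ≠ 0) (hv : ‖v‖ < 1) (hz : ‖z‖ ≤ 1) :
    ‖bl v z‖ ≤ ‖v - z‖ / (1 - ‖v‖) := by
  have hc : ‖(starRingEnd ℂ) v / (‖v‖ : ℂ)‖ = 1 := by
    rw [norm_div, RCLike.norm_conj]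
    simp [hv0]
  rw [bl, norm_mul, hc, one_mul, norm_div]
  have hden := bl_den_norm' hv hz
  have hv1 : (0:ℝ) < 1 - ‖v‖ := by linarith
  exact div_le_div_of_nonneg_left (norm_nonneg _) hv1 hden

lemma bl_sub_one_norm {v z : ℂ} (hv0 : v ≠ 0) (hv : ‖v‖ ≤ 1) (hz : ‖z‖ < 1) :
    ‖bl v z - 1‖ ≤ 2 * (1 - ‖v‖) / (1 - ‖z‖) := by
  have hd := bl_den_ne_zero hv hz
  have ha : (‖v‖ : ℂ) ≠ 0 := by
    simp [hv0]
  have hvv : v * (starRingEnd ℂ) v = ((‖v‖ : ℂ))^2 := by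
    rw [Complex.mul_conj, Complex.normSq_eq_norm_sq]
    push_cast; ring
  have hnum : bl v z - 1 = (((‖v‖ : ℂ) - 1) * (1 + z * (starRingEnd ℂ) v / (‖v‖ : ℂ)))
      / (1 - (starRingEnd ℂ) v * z) := by
    rw [bl]
    field_simp
    ring_nf
    linear_combination hvv
  rw [hnum, norm_div]
  have h1 : ‖((‖v‖ : ℂ) - 1)‖ = 1 - ‖v‖ := by
    rw [← norm_neg]
    have : -((‖v‖ : ℂ) - 1) = ((1 - ‖v‖ : ℝ) : ℂ) := by push_cast; ring
    rw [this, Complex.norm_real, Real.norm_of_nonneg (by linarith)]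
  have h2 : ‖1 + z * (starRingEnd ℂ) v / (‖v‖ : ℂ)‖ ≤ 2 := by
    calc ‖1 + z * (starRingEnd ℂ) v / (‖v‖ : ℂ)‖
        ≤ ‖(1:ℂ)‖ + ‖z * (starRingEnd ℂ) v / (‖v‖ : ℂ)‖ := norm_add_le _ _
      _ ≤ 1 + 1 := by
          gcongr
          · exact norm_one.le
          · rw [norm_div, norm_mul, RCLike.norm_conj]
            rw [Complex.norm_real, Real.norm_of_nonneg (norm_nonneg v)]
            rw [div_le_one (norm_pos_iff.mpr hv0)]
            calc ‖z‖ * ‖v‖ ≤ 1 * ‖v‖ := by nlinarith [norm_nonneg v]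
              _ = ‖v‖ := one_mul _
            
      _ = 2 := by norm_num
  rw [norm_mul, h1]
  have hden := bl_den_norm hv hz
  have hz1 : (0:ℝ) < 1 - ‖z‖ := by linarith
  rw [div_le_div_iff₀ (by linarith) hz1]
  have hv1 : 0 ≤ 1 - ‖v‖ := by linarith
  calc (1 - ‖v‖) * ‖1 + z * (starRingEnd ℂ) v / (‖v‖ : ℂ)‖ * (1 - ‖z‖)
      ≤ (1 - ‖v‖) * 2 * ‖1 - (starRingEnd ℂ) v * z‖ := by
        apply mul_le_mul
        · exact mul_le_mul_of_nonneg_left h2 hv1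
        · exact hden
        · linarith
        · positivity
    _ = 2 * (1 - ‖v‖) * ‖1 - (starRingEnd ℂ) v * z‖ := by ring

lemma bl_ne_zero {v z : ℂ} (hv0 : v ≠ 0) (hv : ‖v‖ ≤ 1) (hz : ‖z‖ < 1) (hvz : z ≠ v) :
    bl v z ≠ 0 := by
  have hd := bl_den_ne_zero hv hz
  have ha : (‖v‖ : ℂ) ≠ 0 := by simp [hv0]
  have hc : (starRingEnd ℂ) v ≠ 0 := by simpa using hv0
  exact mul_ne_zero (div_ne_zero hc ha) (div_ne_zero (sub_ne_zero.mpr (Ne.symm hvz)) hd)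

open scoped ComplexInnerProductSpace

lemma contraction_step {H : Type*} [NormedAddCommGroup H] [InnerProductSpace ℂ H]
    (S : H →L[ℂ] H) (hS : ∀ x : H, ‖S x‖ ≤ ‖x‖) (v : ℂ) (hv : ‖v‖ ≤ 1) (x : H) :
    ‖v • x - S x‖ ≤ ‖x - (starRingEnd ℂ) v • S x‖ := by
  have e1 : ‖v • x - S x‖ ^ 2 = ‖v • x‖ ^ 2 - 2 * RCLike.re (⟪v • x, S x⟫ : ℂ) + ‖S x‖ ^ 2 :=
    norm_sub_sq _ _
  have e2 : ‖x - (starRingEnd ℂ) v • S x‖ ^ 2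
      = ‖x‖ ^ 2 - 2 * RCLike.re (⟪x, (starRingEnd ℂ) v • S x⟫ : ℂ) + ‖(starRingEnd ℂ) v • S x‖ ^ 2 :=
    norm_sub_sq _ _
  have e3 : (⟪v • x, S x⟫ : ℂ) = (starRingEnd ℂ) v * ⟪x, S x⟫ := inner_smul_left _ _ _
  have e4 : (⟪x, (starRingEnd ℂ) v • S x⟫ : ℂ) = (starRingEnd ℂ) v * ⟪x, S x⟫ :=
    inner_smul_right _ _ _
  have e5 : ‖v • x‖ = ‖v‖ * ‖x‖ := norm_smul _ _
  have e6 : ‖(starRingEnd ℂ) v • S x‖ = ‖v‖ * ‖S x‖ := by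
    rw [norm_smul, RCLike.norm_conj]
  have key : ‖v • x - S x‖ ^ 2 ≤ ‖x - (starRingEnd ℂ) v • S x‖ ^ 2 := by
    rw [e1, e2, e3, e4, e5, e6]
    have h1 := hS x
    have h2 : (0:ℝ) ≤ ‖S x‖ := norm_nonneg _
    have h3 : (0:ℝ) ≤ ‖x‖ := norm_nonneg _
    have h4 : (0:ℝ) ≤ ‖v‖ := norm_nonneg _
    nlinarith [mul_nonneg (by nlinarith : (0:ℝ) ≤ 1 - ‖v‖^2)
      (by nlinarith : (0:ℝ) ≤ ‖x‖^2 - ‖S x‖^2)]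
  have := (pow_le_pow_iff_left₀ (norm_nonneg _) (norm_nonneg _) two_ne_zero).mp key
  exact this


section Helpers

lemma iterDerivWithin_eq {f : ℂ → ℂ} {s : Set ℂ} {x : ℂ} (hs : IsOpen s) (hx : x ∈ s) (n : ℕ) :
    iteratedDerivWithin n f s x = iteratedDeriv n f x := by
  rw [iteratedDerivWithin_eq_iteratedFDerivWithin, iteratedDeriv_eq_iteratedFDeriv,
    iteratedFDerivWithin_of_isOpen n hs hx]

lemma vanish_of_bound {f : ℂ → ℂ} {z₀ : ℂ} (hf : AnalyticAt ℂ f z₀) {C : ℝ} {m : ℕ}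
    (hb : ∀ᶠ z in nhdsWithin z₀ {z₀}ᶜ, ‖f z‖ ≤ C * ‖z - z₀‖ ^ m) :
    ∀ s < m, iteratedDeriv s f z₀ = 0 := by
  obtain ⟨p, hp⟩ := hf
  intro s hs
  have hc := coeff_eq_zero_of_bound m hp hb s hs
  rw [← coeff_eq_iteratedDeriv hp s, hc, mul_zero]

lemma factor_of_vanish {f : ℂ → ℂ} {z₀ : ℂ} (hf : AnalyticAt ℂ f z₀) {m : ℕ}
    (hd : ∀ s < m, iteratedDeriv s f z₀ = 0) :
    ∃ u : ℂ → ℂ, AnalyticAt ℂ u z₀ ∧ ∀ z, f z = (z - z₀) ^ m * u z := by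
  obtain ⟨p, hp⟩ := hf
  apply exists_factor_of_coeff_eq_zero m hp
  intro s hs
  have h1 := coeff_eq_iteratedDeriv hp s
  rw [hd s hs] at h1
  have hfac : (Nat.factorial s : ℂ) ≠ 0 := Nat.cast_ne_zero.mpr (Nat.factorial_ne_zero s)
  exact (mul_eq_zero.mp h1).resolve_left hfac

lemma eventually_zero_of_all_deriv {f : ℂ → ℂ} {z₀ : ℂ} (hf : AnalyticAt ℂ f z₀)
    (hd : ∀ s : ℕ, iteratedDeriv s f z₀ = 0) : ∀ᶠ z in nhds z₀, f z = 0 := by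
  obtain ⟨p, hp⟩ := hf
  have hc : ∀ s : ℕ, p.coeff s = 0 := by
    intro s
    have h1 := coeff_eq_iteratedDeriv hp s
    rw [hd s] at h1
    have hfac : (Nat.factorial s : ℂ) ≠ 0 := Nat.cast_ne_zero.mpr (Nat.factorial_ne_zero s)
    exact (mul_eq_zero.mp h1).resolve_left hfac
  have := hasFPowerSeriesAt_iff'.mp hp
  filter_upwards [this] with z hz
  have : HasSum (fun n : ℕ => (z - z₀) ^ n • p.coeff n) 0 := by
    simpa [hc] using hasSum_zero (α := ℂ) (β := ℕ)
  exact hz.unique this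

end Helpers

/-- auxiliary sequence of Blaschke-shifted vectors -/
private noncomputable def blSeq {Ω : Set ℂ} {H : Type*} [NormedAddCommGroup H]
    [InnerProductSpace ℂ H] [CompleteSpace H] (F : RKFramework Ω H) (v : ℕ → ℂ)
    (A : ℕ → (H →L[ℂ] H)ˣ) (g : H) : ℕ → H
  | 0 => g
  | n+1 => ((starRingEnd ℂ) (v n) / (‖v n‖ : ℂ)) •
      (v n • ((((A n)⁻¹ : (H →L[ℂ] H)ˣ) : H →L[ℂ] H) (blSeq F v A g n))
        - F.S ((((A n)⁻¹ : (H →L[ℂ] H)ˣ) : H →L[ℂ] H) (blSeq F v A g n)))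


set_option maxHeartbeats 2000000 in
/-- Theorem 4.7: if `Ω = 𝔻` and `‖S‖ ≤ 1`, then the union of a zero set for `H`
(counted with multiplicities) with a Blaschke sequence is again a zero set for `H`. -/
theorem stmt8 (F : RKFramework (Metric.ball (0 : ℂ) 1) H) (hS : ‖F.S‖ ≤ 1)
    (w : ℕ → ℂ) (hw : ∀ j, w j ∈ Metric.ball (0 : ℂ) 1 ∧ w j ≠ 0)
    (g : H) (hg : g ≠ 0)
    (hgz : ∀ z ∈ Metric.ball (0 : ℂ) 1, ∀ s : ℕ,
      (s : ℕ∞) < {j : ℕ | w j = z}.encard →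
        iteratedDerivWithin s (F.ι g) (Metric.ball (0 : ℂ) 1) z = 0)
    (v : ℕ → ℂ) (hv : ∀ i, v i ∈ Metric.ball (0 : ℂ) 1 ∧ v i ≠ 0)
    (hBlaschke : Summable fun i : ℕ => 1 - ‖v i‖) :
    ∃ h : H, h ≠ 0 ∧ ∀ z ∈ Metric.ball (0 : ℂ) 1, ∀ s : ℕ,
      (s : ℕ∞) < {j : ℕ | w j = z}.encard + {i : ℕ | v i = z}.encard →
        iteratedDerivWithin s (F.ι h) (Metric.ball (0 : ℂ) 1) z = 0 := by
  classical
  have hDopen : IsOpen (Metric.ball (0 : ℂ) 1) := Metric.isOpen_ball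
  have hmem : ∀ z ∈ Metric.ball (0 : ℂ) 1, ‖z‖ < 1 := fun z hz => mem_ball_zero_iff.mp hz
  have hι0 : F.ι (0 : H) = 0 := map_zero F.ι
  have hAnal : ∀ f : H, AnalyticOnNhd ℂ (F.ι f) (Metric.ball (0 : ℂ) 1) :=
    fun f => (F.analytic f).analyticOnNhd hDopen
  have hSx : ∀ x : H, ‖F.S x‖ ≤ ‖x‖ := fun x => (F.S.le_opNorm x).trans
    (by nlinarith [norm_nonneg x, (F.S).opNorm_nonneg])
  have hvmem : ∀ i, ‖v i‖ < 1 := fun i => hmem _ (hv i).1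
  have hvne : ∀ i, v i ≠ 0 := fun i => (hv i).2
  -- w-multiplicities are finite
  have hfinw : ∀ z ∈ Metric.ball (0 : ℂ) 1, {j | w j = z}.encard ≠ ⊤ := by
    intro z hz htop
    have hall : ∀ s : ℕ, iteratedDeriv s (F.ι g) z = 0 := by
      intro s
      have h1 : ((s : ℕ∞)) < {j | w j = z}.encard := by
        rw [htop]; exact lt_of_le_of_ne le_top (by simp)
      have := hgz z hz s h1
      rwa [iterDerivWithin_eq hDopen hz] at this
    have hev : ∀ᶠ y in nhds z, F.ι g y = 0 :=
      eventually_zero_of_all_deriv (hAnal g z hz) hall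
    have heq : Set.EqOn (F.ι g) 0 (Metric.ball (0 : ℂ) 1) :=
      (hAnal g).eqOn_zero_of_preconnected_of_eventuallyEq_zero
        F.isConnected.isPreconnected hz hev
    exact hg (F.ι_inj g 0 (by simpa [hι0] using heq))
  -- v-multiplicities are finite
  have hfinv : ∀ z ∈ Metric.ball (0 : ℂ) 1, {i | v i = z}.encard ≠ ⊤ := by
    intro z hz htop
    have hinf : {i | v i = z}.Infinite := Set.encard_eq_top_iff.mp htop
    have h0 : Tendsto (fun i => 1 - ‖v i‖) atTop (𝓝 0) :=
      hBlaschke.tendsto_atTop_zero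
    have hz1 : (0:ℝ) < 1 - ‖z‖ := by have := hmem z hz; linarith
    obtain ⟨N, hN⟩ := eventually_atTop.mp (h0.eventually_lt_const hz1)
    obtain ⟨i, hi_mem, hiN⟩ := hinf.exists_gt N
    have h2 := hN i hiN.le
    have h3 : v i = z := hi_mem
    rw [h3] at h2
    linarith
  -- a point where ι g does not vanish
  have hgpt : ∃ z ∈ Metric.ball (0 : ℂ) 1, F.ι g z ≠ 0 := by
    by_contra hcon
    push_neg at hcon
    exact hg (F.ι_inj g 0 (fun z hz => by simpa [hι0] using hcon z hz))
  -- the Blaschke shift operators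
  have hSop : ∀ i : ℕ, ‖(starRingEnd ℂ) (v i) • F.S‖ < 1 := by
    intro i
    calc ‖(starRingEnd ℂ) (v i) • F.S‖ = ‖(starRingEnd ℂ) (v i)‖ * ‖F.S‖ := norm_smul _ _
      _ = ‖v i‖ * ‖F.S‖ := by rw [RCLike.norm_conj]
      _ ≤ ‖v i‖ * 1 := by
          have := hvmem i
          nlinarith [norm_nonneg (v i), (F.S).opNorm_nonneg]
      _ < 1 := by rw [mul_one]; exact hvmem i
  set A : ℕ → (H →L[ℂ] H)ˣ := fun i => Units.oneSub _ (hSop i) with hA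
  set gs : ℕ → H := blSeq F v A g with hgs
  -- evaluation of the inverse operators
  have hinv_eval : ∀ (i : ℕ) (y : H), ∀ z ∈ Metric.ball (0 : ℂ) 1,
      F.ι ((((A i)⁻¹ : (H →L[ℂ] H)ˣ) : H →L[ℂ] H) y) z
        = F.ι y z / (1 - (starRingEnd ℂ) (v i) * z) := by
    intro i y z hz
    have hden := bl_den_ne_zero (hvmem i).le (hmem z hz)
    set x : H := (((A i)⁻¹ : (H →L[ℂ] H)ˣ) : H →L[ℂ] H) y with hx
    have hAx : x - (starRingEnd ℂ) (v i) • F.S x = y := by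
      have h1 : ((A i : H →L[ℂ] H) * (((A i)⁻¹ : (H →L[ℂ] H)ˣ) : H →L[ℂ] H)) y = y := by
        rw [Units.mul_inv, ContinuousLinearMap.one_apply]
      have h2 : (A i : H →L[ℂ] H) x = y := h1
      rw [hA] at h2
      rw [Units.val_oneSub] at h2
      simpa using h2
    have h3 : F.ι y z = (1 - (starRingEnd ℂ) (v i) * z) * F.ι x z := by
      calc F.ι y z = F.ι (x - (starRingEnd ℂ) (v i) • F.S x) z := by rw [hAx]
        _ = F.ι x z - (starRingEnd ℂ) (v i) * F.ι (F.S x) z := by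
            rw [map_sub, map_smul]; simp
        _ = F.ι x z - (starRingEnd ℂ) (v i) * (z * F.ι x z) := by rw [F.ι_S x z hz]
        _ = (1 - (starRingEnd ℂ) (v i) * z) * F.ι x z := by ring
    rw [h3, mul_comm, mul_div_assoc, div_self hden, mul_one]
  -- evaluation of the sequence
  have hbl_eval : ∀ n, ∀ z ∈ Metric.ball (0 : ℂ) 1,
      F.ι (gs n) z = (∏ i ∈ Finset.range n, bl (v i) z) * F.ι g z := by
    intro n
    induction n with
    | zero => intro z _; simp [hgs, blSeq]
    | succ n ih =>
      intro z hz
      have hden := bl_den_ne_zero (hvmem n).le (hmem z hz)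
      have hstep : gs (n+1) = ((starRingEnd ℂ) (v n) / (‖v n‖ : ℂ)) •
          (v n • ((((A n)⁻¹ : (H →L[ℂ] H)ˣ) : H →L[ℂ] H) (gs n))
            - F.S ((((A n)⁻¹ : (H →L[ℂ] H)ˣ) : H →L[ℂ] H) (gs n))) := rfl
      set x : H := (((A n)⁻¹ : (H →L[ℂ] H)ˣ) : H →L[ℂ] H) (gs n) with hxdef
      have h1 : F.ι (gs (n+1)) z = ((starRingEnd ℂ) (v n) / (‖v n‖ : ℂ)) *
          (v n * F.ι x z - z * F.ι x z) := by
        rw [hstep, map_smul]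
        simp only [Pi.smul_apply, smul_eq_mul]
        congr 1
        rw [map_sub, map_smul]
        simp only [Pi.sub_apply, Pi.smul_apply, smul_eq_mul]
        rw [F.ι_S x z hz]
      have h2 : F.ι x z = F.ι (gs n) z / (1 - (starRingEnd ℂ) (v n) * z) :=
        hinv_eval n (gs n) z hz
      rw [h1, h2, ih z hz, Finset.prod_range_succ, bl]
      field_simp
  -- norm bound
  have hnorm : ∀ n, ‖gs n‖ ≤ ‖g‖ := by
    intro n
    induction n with
    | zero => exact le_rfl
    | succ n ih =>
      have hstep : gs (n+1) = ((starRingEnd ℂ) (v n) / (‖v n‖ : ℂ)) •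
          (v n • ((((A n)⁻¹ : (H →L[ℂ] H)ˣ) : H →L[ℂ] H) (gs n))
            - F.S ((((A n)⁻¹ : (H →L[ℂ] H)ˣ) : H →L[ℂ] H) (gs n))) := rfl
      set x : H := (((A n)⁻¹ : (H →L[ℂ] H)ˣ) : H →L[ℂ] H) (gs n) with hxdef
      have hAx : x - (starRingEnd ℂ) (v n) • F.S x = gs n := by
        have h1 : ((A n : H →L[ℂ] H) * (((A n)⁻¹ : (H →L[ℂ] H)ˣ) : H →L[ℂ] H)) (gs n)
            = gs n := by
          rw [Units.mul_inv, ContinuousLinearMap.one_apply]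
        have h2 : (A n : H →L[ℂ] H) x = gs n := h1
        rw [hA] at h2
        rw [Units.val_oneSub] at h2
        simpa using h2
      have hcnorm : ‖(starRingEnd ℂ) (v n) / (‖v n‖ : ℂ)‖ = 1 := by
        rw [norm_div, RCLike.norm_conj]
        simp [hvne n]
      rw [hstep, norm_smul, hcnorm, one_mul]
      calc ‖v n • x - F.S x‖ ≤ ‖x - (starRingEnd ℂ) (v n) • F.S x‖ :=
            contraction_step F.S hSx (v n) (hvmem n).le x
        _ = ‖gs n‖ := by rw [hAx]
        _ ≤ ‖g‖ := ih
  -- convergence of the Blaschke products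
  have hsummable : ∀ z : ℂ, z ∈ Metric.ball (0 : ℂ) 1 →
      Summable (fun i => ‖bl (v i) z - 1‖) := by
    intro z hz
    have hz1 : (0:ℝ) < 1 - ‖z‖ := by have := hmem z hz; linarith
    apply Summable.of_nonneg_of_le (fun i => norm_nonneg _)
      (fun i => bl_sub_one_norm (hvne i) (hvmem i).le (hmem z hz))
    have : (fun i => 2 * (1 - ‖v i‖) / (1 - ‖z‖))
        = fun i => (2 / (1 - ‖z‖)) * (1 - ‖v i‖) := by
      funext i
      ring
    rw [this]
    exact hBlaschke.mul_left _
  have hPex : ∀ z : ℂ, ∃ Pz : ℂ, z ∈ Metric.ball (0 : ℂ) 1 →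
      (Tendsto (fun n => ∏ i ∈ Finset.range n, bl (v i) z) atTop (𝓝 Pz) ∧
        ((∀ i, z ≠ v i) → Pz ≠ 0)) := by
    intro z
    by_cases hz : z ∈ Metric.ball (0 : ℂ) 1
    · obtain ⟨P, h1, h2⟩ := prod_convergence (hsummable z hz)
      exact ⟨P, fun _ => ⟨h1, fun hzi => h2 (fun i =>
        bl_ne_zero (hvne i) (hvmem i).le (hmem z hz) (hzi i))⟩⟩
    · exact ⟨0, fun h => absurd h hz⟩
  choose P hP using hPex
  -- density of kernels
  have hker : ∀ z ∈ Metric.ball (0 : ℂ) 1, ∀ f : H, (inner ℂ (F.k z) f : ℂ) = F.ι f z :=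
    F.reproducing
  have hdense : (Submodule.span ℂ (F.k '' (Metric.ball (0 : ℂ) 1))).topologicalClosure = ⊤ := by
    rw [Submodule.topologicalClosure_eq_top_iff]
    rw [Submodule.eq_bot_iff]
    intro x hx
    apply F.ι_inj x 0
    intro z hz
    have h1 : F.k z ∈ Submodule.span ℂ (F.k '' (Metric.ball (0 : ℂ) 1)) :=
      Submodule.subset_span ⟨z, hz, rfl⟩
    have h2 : (inner ℂ (F.k z) x : ℂ) = 0 :=
      (Submodule.mem_orthogonal _ x).mp hx _ h1
    rw [hι0]
    simpa [← hker z hz x] using h2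
  -- convergence of inner products against kernels
  have hker_conv : ∀ z ∈ Metric.ball (0 : ℂ) 1,
      Tendsto (fun n => (inner ℂ (gs n) (F.k z) : ℂ)) atTop
        (𝓝 ((starRingEnd ℂ) (P z * F.ι g z))) := by
    intro z hz
    have h1 : ∀ n, (inner ℂ (gs n) (F.k z) : ℂ)
        = (starRingEnd ℂ) ((∏ i ∈ Finset.range n, bl (v i) z) * F.ι g z) := by
      intro n
      rw [← inner_conj_symm, hker z hz, hbl_eval n z hz]
    simp only [h1]
    exact ((hP z hz).1.mul_const _).star
  -- Cauchy property for all vectors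
  have hCauchy : ∀ x : H, ∃ l : ℂ, Tendsto (fun n => (inner ℂ (gs n) x : ℂ)) atTop (𝓝 l) := by
    intro x
    have hC : CauchySeq (fun n => (inner ℂ (gs n) x : ℂ)) := by
      -- first on the span of kernels
      have hspan : ∀ y ∈ Submodule.span ℂ (F.k '' (Metric.ball (0 : ℂ) 1)),
          ∃ l : ℂ, Tendsto (fun n => (inner ℂ (gs n) y : ℂ)) atTop (𝓝 l) := by
        intro y hy
        induction hy using Submodule.span_induction with
        | mem u hu =>
          obtain ⟨z, hz, rfl⟩ := hu
          exact ⟨_, hker_conv z hz⟩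
        | zero => exact ⟨0, by simpa using tendsto_const_nhds⟩
        | add u w _ _ hu hw =>
          obtain ⟨lu, hlu⟩ := hu
          obtain ⟨lw, hlw⟩ := hw
          exact ⟨lu + lw, by simpa [inner_add_right] using hlu.add hlw⟩
        | smul a u _ hu =>
          obtain ⟨lu, hlu⟩ := hu
          exact ⟨a * lu, by simpa [inner_smul_right] using hlu.const_mul a⟩
      rw [Metric.cauchySeq_iff]
      intro ε hε
      have hgnorm : (0:ℝ) < ‖g‖ + 1 := by positivity
      have hδ : (0:ℝ) < ε / (3 * (‖g‖ + 1)) := by positivity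
      have hxcl : x ∈ closure ((Submodule.span ℂ (F.k '' (Metric.ball (0 : ℂ) 1)) : Set H)) := by
        rw [← Submodule.topologicalClosure_coe, hdense]
        trivial
      obtain ⟨y, hy, hxy⟩ := Metric.mem_closure_iff.mp hxcl _ hδ
      obtain ⟨l, hl⟩ := hspan y hy
      obtain ⟨N, hN⟩ := Metric.cauchySeq_iff.mp hl.cauchySeq (ε / 3) (by positivity)
      refine ⟨N, fun m hm n hn => ?_⟩
      have hb : ∀ k : ℕ, ‖(inner ℂ (gs k) x : ℂ) - (inner ℂ (gs k) y : ℂ)‖ ≤ ε / 3 := by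
        intro k
        rw [← inner_sub_right]
        calc ‖(inner ℂ (gs k) (x - y) : ℂ)‖ ≤ ‖gs k‖ * ‖x - y‖ := norm_inner_le_norm _ _
          _ ≤ (‖g‖ + 1) * (ε / (3 * (‖g‖ + 1))) := by
              apply mul_le_mul
              · linarith [hnorm k]
              · rw [← dist_eq_norm]; exact hxy.le
              · positivity
              · positivity
          _ = ε / 3 := by
              have hg1 : (‖g‖:ℝ) + 1 ≠ 0 := by positivity
              field_simp
      have h5 := hN m hm n hn
      rw [dist_eq_norm] at h5 ⊢
      calc ‖(inner ℂ (gs m) x : ℂ) - (inner ℂ (gs n) x : ℂ)‖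
          = ‖((inner ℂ (gs m) x : ℂ) - (inner ℂ (gs m) y : ℂ))
              + ((inner ℂ (gs m) y : ℂ) - (inner ℂ (gs n) y : ℂ))
              + ((inner ℂ (gs n) y : ℂ) - (inner ℂ (gs n) x : ℂ))‖ := by ring_nf
        _ ≤ ‖((inner ℂ (gs m) x : ℂ) - (inner ℂ (gs m) y : ℂ))
              + ((inner ℂ (gs m) y : ℂ) - (inner ℂ (gs n) y : ℂ))‖
            + ‖(inner ℂ (gs n) y : ℂ) - (inner ℂ (gs n) x : ℂ)‖ := norm_add_le _ _
        _ ≤ ‖(inner ℂ (gs m) x : ℂ) - (inner ℂ (gs m) y : ℂ)‖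
            + ‖(inner ℂ (gs m) y : ℂ) - (inner ℂ (gs n) y : ℂ)‖
            + ‖(inner ℂ (gs n) y : ℂ) - (inner ℂ (gs n) x : ℂ)‖ := by
              gcongr
              exact norm_add_le _ _
        _ < ε := by
            have := hb m
            have h7 : ‖(inner ℂ (gs n) y : ℂ) - (inner ℂ (gs n) x : ℂ)‖ ≤ ε / 3 := by
              rw [norm_sub_rev]; exact hb n
            linarith
    exact cauchySeq_tendsto_of_complete hC
  choose L hL using hCauchy
  -- L is a bounded linear functional
  have hLadd : ∀ x y : H, L (x + y) = L x + L y := by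
    intro x y
    refine tendsto_nhds_unique (hL (x + y)) ?_
    simpa [inner_add_right] using (hL x).add (hL y)
  have hLsmul : ∀ (a : ℂ) (x : H), L (a • x) = a * L x := by
    intro a x
    refine tendsto_nhds_unique (hL (a • x)) ?_
    simpa [inner_smul_right] using (hL x).const_mul a
  have hLbound : ∀ x : H, ‖L x‖ ≤ ‖g‖ * ‖x‖ := by
    intro x
    refine le_of_tendsto (hL x).norm (Filter.Eventually.of_forall fun n => ?_)
    calc ‖(inner ℂ (gs n) x : ℂ)‖ ≤ ‖gs n‖ * ‖x‖ := norm_inner_le_norm _ _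
      _ ≤ ‖g‖ * ‖x‖ := by
          apply mul_le_mul_of_nonneg_right (hnorm n) (norm_nonneg x)
  set Lmap : H →L[ℂ] ℂ := LinearMap.mkContinuous
    { toFun := L
      map_add' := hLadd
      map_smul' := fun a x => by simpa using hLsmul a x } ‖g‖ hLbound with hLmap
  set h₀ : H := (InnerProductSpace.toDual ℂ H).symm Lmap with hh₀def
  have hh₀ : ∀ x : H, (inner ℂ h₀ x : ℂ) = L x := by
    intro x
    rw [hh₀def]
    exact InnerProductSpace.toDual_symm_apply
  -- the representation of h₀
  have hrep : ∀ z ∈ Metric.ball (0 : ℂ) 1, F.ι h₀ z = P z * F.ι g z := by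
    intro z hz
    have h1 : L (F.k z) = (starRingEnd ℂ) (P z * F.ι g z) :=
      tendsto_nhds_unique (hL (F.k z)) (hker_conv z hz)
    have h2 : F.ι h₀ z = (inner ℂ (F.k z) h₀ : ℂ) := (hker z hz h₀).symm
    rw [h2, ← inner_conj_symm, hh₀ (F.k z), h1]
    simp
  refine ⟨h₀, ?_, ?_⟩
  · -- h₀ ≠ 0
    obtain ⟨z₁, hz₁, hgz₁⟩ := hgpt
    have hcont : ContinuousAt (F.ι g) z₁ := (hAnal g z₁ hz₁).continuousAt
    have hev1 : ∀ᶠ y in nhds z₁, F.ι g y ≠ 0 := hcont.eventually_ne hgz₁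
    have hev2 : ∀ᶠ y in nhds z₁, y ∈ Metric.ball (0 : ℂ) 1 := hDopen.mem_nhds hz₁
    obtain ⟨r, hr, hball⟩ := Metric.eventually_nhds_iff.mp (hev1.and hev2)
    -- find a point z₁ + t (t real, 0 < t < r) avoiding the range of v
    have hcount : (Set.range v).Countable := Set.countable_range v
    have hinj : Function.Injective (fun t : ℝ => z₁ + (t : ℂ)) := by
      intro a b hab
      simpa using Complex.ofReal_injective (add_left_cancel hab)
    have hpre : (Set.Ioo (0:ℝ) r ⊆ (fun t : ℝ => z₁ + (t : ℂ)) ⁻¹' (Set.range v)) → False := by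
      intro hsub
      have h1 : (Set.Ioo (0:ℝ) r).Countable := (hcount.preimage hinj).mono hsub
      have h2 := h1.le_aleph0
      rw [Cardinal.mk_Ioo_real hr] at h2
      exact absurd h2 (not_le.mpr Cardinal.aleph0_lt_continuum)
    obtain ⟨t, ht, htv⟩ : ∃ t ∈ Set.Ioo (0:ℝ) r, z₁ + (t:ℂ) ∉ Set.range v := by
      by_contra hcon
      push_neg at hcon
      exact hpre fun t htt => hcon t htt
    set zstar : ℂ := z₁ + (t : ℂ) with hzs
    have hdist : dist zstar z₁ < r := by
      rw [hzs, dist_eq_norm, add_sub_cancel_left, Complex.norm_real,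
        Real.norm_of_nonneg ht.1.le]
      exact ht.2
    obtain ⟨hzne, hzD⟩ := hball hdist
    have hPne : P zstar ≠ 0 := by
      apply (hP zstar hzD).2
      intro i hi
      exact htv ⟨i, hi.symm⟩
    intro hcon
    apply hPne
    have h6 : F.ι h₀ zstar = 0 := by rw [hcon, hι0]; rfl
    rw [hrep zstar hzD] at h6
    exact (mul_eq_zero.mp h6).resolve_right hzne
  · -- the vanishing conditions
    intro z₀ hz₀ s hs
    set a : ℕ := ({j | w j = z₀}.encard).toNat with hadef
    set b : ℕ := ({i | v i = z₀}.encard).toNat with hbdef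
    have hacast : ({j | w j = z₀}.encard) = (a : ℕ∞) :=
      (ENat.coe_toNat (hfinw z₀ hz₀)).symm
    have hbcast : ({i | v i = z₀}.encard) = (b : ℕ∞) :=
      (ENat.coe_toNat (hfinv z₀ hz₀)).symm
    have hsab : s < a + b := by
      rw [hacast, hbcast] at hs
      exact_mod_cast hs
    -- bound for ι g near z₀
    have hgder : ∀ s' < a, iteratedDeriv s' (F.ι g) z₀ = 0 := by
      intro s' hs'
      have h1 : ((s' : ℕ∞)) < {j | w j = z₀}.encard := by
        rw [hacast]; exact_mod_cast hs'
      have := hgz z₀ hz₀ s' h1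
      rwa [iterDerivWithin_eq hDopen hz₀] at this
    obtain ⟨u, hu, hfu⟩ := factor_of_vanish (hAnal g z₀ hz₀) hgder
    obtain ⟨r₂, hr₂, hubound⟩ : ∃ r₂ > 0, ∀ y, dist y z₀ < r₂ → ‖u y‖ ≤ ‖u z₀‖ + 1 := by
      have h1 : ∀ᶠ y in nhds z₀, ‖u y‖ < ‖u z₀‖ + 1 :=
        (hu.continuousAt.norm).eventually_lt_const (by linarith)
      obtain ⟨r₂, hr₂, h2⟩ := Metric.eventually_nhds_iff.mp h1
      exact ⟨r₂, hr₂, fun y hy => (h2 hy).le⟩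
    -- bound for the Blaschke products near z₀
    have hIvfin : {i | v i = z₀}.Finite := Set.encard_ne_top_iff.mp (hfinv z₀ hz₀)
    have hcard : hIvfin.toFinset.card = b := by
      have := hIvfin.encard_eq_coe_toFinset_card
      rw [hbcast] at this
      exact_mod_cast this.symm
    obtain ⟨N, hNsub⟩ := Finset.exists_nat_subset_range hIvfin.toFinset
    have hq0 : (0:ℝ) < 1 - ‖z₀‖ := by have := hmem z₀ hz₀; linarith
    have hBn : ∀ z ∈ Metric.ball (0 : ℂ) 1, ∀ n, N ≤ n →
        ‖∏ i ∈ Finset.range n, bl (v i) z‖ ≤ (‖z - z₀‖ / (1 - ‖z₀‖)) ^ b := by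
      intro z hz n hn
      have hsubn : hIvfin.toFinset ⊆ Finset.range n :=
        hNsub.trans (Finset.range_subset_range.mpr hn)
      rw [norm_prod]
      rw [← Finset.prod_sdiff hsubn]
      have h1 : ∏ i ∈ Finset.range n \ hIvfin.toFinset, ‖bl (v i) z‖ ≤ 1 := by
        apply Finset.prod_le_one
        · intro i _; exact norm_nonneg _
        · intro i _; exact bl_norm_le_one (hvne i) (hvmem i).le (hmem z hz)
      have h2 : ∏ i ∈ hIvfin.toFinset, ‖bl (v i) z‖ ≤ (‖z - z₀‖ / (1 - ‖z₀‖)) ^ b := by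
        rw [← hcard, ← Finset.prod_const]
        apply Finset.prod_le_prod
        · intro i _; exact norm_nonneg _
        · intro i hi
          have hvi : v i = z₀ := by simpa using (Set.Finite.mem_toFinset hIvfin).mp hi
          calc ‖bl (v i) z‖ ≤ ‖v i - z‖ / (1 - ‖v i‖) :=
                bl_norm_le' (hvne i) (hvmem i) (hmem z hz).le
            _ = ‖z - z₀‖ / (1 - ‖z₀‖) := by rw [hvi, norm_sub_rev]
      calc (∏ i ∈ Finset.range n \ hIvfin.toFinset, ‖bl (v i) z‖)
            * ∏ i ∈ hIvfin.toFinset, ‖bl (v i) z‖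
          ≤ 1 * ((‖z - z₀‖ / (1 - ‖z₀‖)) ^ b) := by
            apply mul_le_mul h1 h2 (Finset.prod_nonneg fun i _ => norm_nonneg _) zero_le_one
        _ = (‖z - z₀‖ / (1 - ‖z₀‖)) ^ b := one_mul _
    have hPB : ∀ z ∈ Metric.ball (0 : ℂ) 1, ‖P z‖ ≤ (‖z - z₀‖ / (1 - ‖z₀‖)) ^ b := by
      intro z hz
      refine le_of_tendsto (hP z hz).1.norm ?_
      filter_upwards [eventually_ge_atTop N] with n hn
      exact hBn z hz n hn
    -- the final big-O bound
    obtain ⟨r₃, hr₃, hball₃⟩ := Metric.isOpen_iff.mp hDopen z₀ hz₀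
    set C : ℝ := (‖u z₀‖ + 1) / (1 - ‖z₀‖) ^ b with hC
    have hbound : ∀ᶠ z in nhdsWithin z₀ {z₀}ᶜ, ‖F.ι h₀ z‖ ≤ C * ‖z - z₀‖ ^ (a + b) := by
      have hmemnhds : Metric.ball z₀ (min r₂ r₃) ∈ nhds z₀ :=
        Metric.ball_mem_nhds z₀ (lt_min hr₂ hr₃)
      refine Filter.eventually_inf_principal.mpr ?_
      filter_upwards [hmemnhds] with z hzball _
      have hzD : z ∈ Metric.ball (0 : ℂ) 1 :=
        hball₃ (Metric.ball_subset_ball (min_le_right r₂ r₃) hzball)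
      have hzr₂ : dist z z₀ < r₂ := lt_of_lt_of_le hzball (le_trans (le_refl _) (min_le_left r₂ r₃))
      rw [hrep z hzD, norm_mul]
      have h1 : ‖F.ι g z‖ ≤ ‖z - z₀‖ ^ a * (‖u z₀‖ + 1) := by
        rw [hfu z, norm_mul, norm_pow]
        exact mul_le_mul_of_nonneg_left (hubound z hzr₂) (by positivity)
      have h2 : ‖P z‖ ≤ (‖z - z₀‖ / (1 - ‖z₀‖)) ^ b := hPB z hzD
      calc ‖P z‖ * ‖F.ι g z‖
          ≤ (‖z - z₀‖ / (1 - ‖z₀‖)) ^ b * (‖z - z₀‖ ^ a * (‖u z₀‖ + 1)) := by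
            apply mul_le_mul h2 h1 (norm_nonneg _) (by positivity)
        _ = C * ‖z - z₀‖ ^ (a + b) := by
            rw [hC, pow_add]
            have hne : (1 - ‖z₀‖) ^ b ≠ 0 := by positivity
            field_simp
            rw [div_pow, div_mul_eq_mul_div, div_mul_cancel₀ _ hne, mul_comm]
    have hvanish := vanish_of_bound (hAnal h₀ z₀ hz₀) hbound s hsab
    rw [iterDerivWithin_eq hDopen hz₀]
    exact hvanish
end

section
/- Assume the Framework. Let f ∈ H ∖ {0} and let J := f − P_{[zf]} f be the S-inner function associated with f. If w ∈ Ω satisfies (ι J)(w) = 0 but (ι f)(w) ≠ 0, then Q_w J ∈ [f], the closed linear span of {S^n f : n ≥ 0}. -/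
open scoped ComplexInnerProductSpace

variable {Ω : Set ℂ} {H : Type*} [NormedAddCommGroup H] [InnerProductSpace ℂ H] [CompleteSpace H]

open Filter Topology in
lemma RKFramework.ext_off (F : RKFramework Ω H) {w : ℂ} (hw : w ∈ Ω) {g₁ g₂ : H}
    (h : Set.EqOn (F.ι g₁) (F.ι g₂) (Ω \ {w})) : g₁ = g₂ := by
  apply F.ι_inj
  intro z hz
  rcases eq_or_ne z w with rfl | hzw
  · have hne : (𝓝[Ω \ {z}] z).NeBot := by
      have heq : 𝓝[Ω \ {z}] z = 𝓝[{z}ᶜ] z := by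
        rw [Set.diff_eq]
        exact nhdsWithin_inter_of_mem (mem_nhdsWithin_of_mem_nhds (F.isOpen.mem_nhds hz))
      rw [heq]
      exact Module.punctured_nhds_neBot ℂ ℂ z
    have t1 : Filter.Tendsto (F.ι g₁) (𝓝[Ω \ {z}] z) (𝓝 (F.ι g₁ z)) :=
      ((F.analytic g₁).continuousOn z hz).mono Set.diff_subset
    have t2 : Filter.Tendsto (F.ι g₂) (𝓝[Ω \ {z}] z) (𝓝 (F.ι g₂ z)) :=
      ((F.analytic g₂).continuousOn z hz).mono Set.diff_subset
    have t1' : Filter.Tendsto (F.ι g₁) (𝓝[Ω \ {z}] z) (𝓝 (F.ι g₂ z)) :=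
      t2.congr' (by filter_upwards [self_mem_nhdsWithin] with x hx using (h hx).symm)
    exact tendsto_nhds_unique t1 t1'
  · exact h ⟨hz, hzw⟩

lemma RKFramework.ι_pow (F : RKFramework Ω H) (f : H) (n : ℕ) {z : ℂ} (hz : z ∈ Ω) :
    F.ι ((F.S ^ n) f) z = z ^ n * F.ι f z := by
  induction n with
  | zero => simp
  | succ n ih =>
    have h1 : (F.S ^ (n + 1)) f = F.S ((F.S ^ n) f) := by rw [pow_succ']; rfl
    rw [h1, F.ι_S _ z hz, ih]; ring

/-- Proposition 5.2: if `w` is a zero of the `S`-inner function `J = f − P_{[zf]} f`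
that is not a zero of `f`, then `Q_w J ∈ [f]`. -/
theorem stmt11 (F : RKFramework Ω H) (f : H) (hf : f ≠ 0)
    (w : ℂ) (hwΩ : w ∈ Ω) (hJw : F.ι (F.J f) w = 0) (hfw : F.ι f w ≠ 0) :
    F.Q w (F.J f) ∈ F.fullSpan f := by
  classical
  set T : H →L[ℂ] H :=
    F.Q w - (ContinuousLinearMap.smulRight (innerSL ℂ (F.k w)) ((F.ι f w)⁻¹ • F.Q w f)) with hT
  have hTx : ∀ x : H, T x = F.Q w x - (F.ι x w * (F.ι f w)⁻¹) • F.Q w f := by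
    intro x
    simp [hT, F.reproducing w hwΩ x, smul_smul]
  have hgen : ∀ n : ℕ, T ((F.S ^ n) f) ∈ F.fullSpan f := by
    intro n
    have hid : F.Q w ((F.S ^ n) f) - (w ^ n) • F.Q w f
        = ∑ k ∈ Finset.range n, (w ^ (n - 1 - k)) • ((F.S ^ k) f) := by
      apply F.ext_off hwΩ
      intro z hz
      obtain ⟨hzΩ, hzw0⟩ := hz
      have hzw : z ≠ w := by simpa using hzw0
      have hsub : z - w ≠ 0 := sub_ne_zero.mpr hzw
      simp only [map_sub, map_smul, map_sum, Pi.sub_apply, Pi.smul_apply,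
        Finset.sum_apply, smul_eq_mul]
      rw [F.ι_Q w hwΩ _ z hzΩ hzw, F.ι_Q w hwΩ f z hzΩ hzw,
        F.ι_pow f n hzΩ, F.ι_pow f n hwΩ]
      have h1 : ∑ k ∈ Finset.range n, w ^ (n - 1 - k) * F.ι ((F.S ^ k) f) z
          = (∑ k ∈ Finset.range n, z ^ k * w ^ (n - 1 - k)) * F.ι f z := by
        rw [Finset.sum_mul]
        exact Finset.sum_congr rfl fun k _ => by rw [F.ι_pow f k hzΩ]; ring
      rw [h1]
      field_simp
      linear_combination (-(F.ι f z)) * geom_sum₂_mul z w n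
    have hval : F.ι ((F.S ^ n) f) w = w ^ n * F.ι f w := F.ι_pow f n hwΩ
    have hcoef : F.ι ((F.S ^ n) f) w * (F.ι f w)⁻¹ = w ^ n := by
      rw [hval, mul_assoc, mul_inv_cancel₀ hfw, mul_one]
    rw [hTx, hcoef, hid]
    apply Submodule.sum_mem
    intro k _
    apply Submodule.smul_mem
    exact Submodule.le_topologicalClosure _ (Submodule.subset_span ⟨k, rfl⟩)
  have hclosed : IsClosed ((F.fullSpan f : Set H)) := Submodule.isClosed_topologicalClosure _
  have hle : F.fullSpan f ≤ Submodule.comap (T : H →ₗ[ℂ] H) (F.fullSpan f) := by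
    apply Submodule.topologicalClosure_minimal
    · rw [Submodule.span_le]
      rintro x ⟨n, rfl⟩
      exact hgen n
    · exact hclosed.preimage T.continuous
  have hfmem : f ∈ F.fullSpan f :=
    Submodule.le_topologicalClosure _ (Submodule.subset_span ⟨0, by simp⟩)
  have hzle : F.zspan f ≤ F.fullSpan f := by
    apply Submodule.topologicalClosure_mono
    apply Submodule.span_mono
    rintro x ⟨n, -, rfl⟩
    exact ⟨n, rfl⟩
  have hJmem : F.J f ∈ F.fullSpan f :=
    Submodule.sub_mem _ hfmem (hzle (Submodule.coe_mem _))
  have hin := hle hJmem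
  rw [Submodule.mem_comap] at hin
  have hTJ : T (F.J f) = F.Q w (F.J f) := by
    rw [hTx, hJw]; simp
  rw [← hTJ]
  exact hin
end

section
/- Assume the Framework. Let f ∈ H ∖ {0} and let J := f − P_{[zf]} f be the S-inner function associated with f. If w ∈ Ω ∖ {0} is such that (ι J)(w) = 0 but (ι f)(w) ≠ 0, then |w| · ‖Q₀‖ · ‖S‖ · ‖Q_w‖ ≥ (1 + ‖S‖² ‖Q_w‖²)^{1/2}, where ‖·‖ denotes operator norm; equivalently, |w| ≥ (1 + ‖S‖²‖Q_w‖²)^{1/2} / (‖Q₀‖‖S‖‖Q_w‖). -/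
open scoped ComplexInnerProductSpace

variable {Ω : Set ℂ} {H : Type*} [NormedAddCommGroup H] [InnerProductSpace ℂ H] [CompleteSpace H]

set_option linter.unusedSectionVars false
namespace RKFramework
open Filter Topology

variable {Ω : Set ℂ} {H : Type*} [NormedAddCommGroup H] [InnerProductSpace ℂ H] [CompleteSpace H]
variable (F : RKFramework Ω H)

/-- Two elements whose realizations agree on `Ω` off a single point are equal. -/
theorem ext_off_s12 {a : ℂ} (ha : a ∈ Ω) {f g : H}
    (h : ∀ z ∈ Ω, z ≠ a → F.ι f z = F.ι g z) : f = g := by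
  apply F.ι_inj
  intro z hz
  rcases eq_or_ne z a with rfl | hza
  · have hΩnhds : 𝓝[Ω] z = 𝓝 z := F.isOpen.nhdsWithin_eq hz
    have hdiff : Ω \ {z} = Ω ∩ {z}ᶜ := Set.diff_eq Ω {z}
    have hfil : 𝓝[Ω \ {z}] z = 𝓝[≠] z := by
      rw [hdiff, nhdsWithin_inter, hΩnhds, inf_eq_right]
      exact nhdsWithin_le_nhds
    haveI : (𝓝[Ω \ {z}] z).NeBot := by rw [hfil]; infer_instance
    have t1 : Filter.Tendsto (F.ι f) (𝓝[Ω \ {z}] z) (𝓝 (F.ι f z)) :=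
      ((F.analytic f).continuousOn z hz).mono Set.diff_subset
    have t2 : Filter.Tendsto (F.ι g) (𝓝[Ω \ {z}] z) (𝓝 (F.ι g z)) :=
      ((F.analytic g).continuousOn z hz).mono Set.diff_subset
    have heq : F.ι f =ᶠ[𝓝[Ω \ {z}] z] F.ι g := by
      filter_upwards [self_mem_nhdsWithin] with x hx
      exact h x hx.1 hx.2
    exact tendsto_nhds_unique (t1.congr' heq) t2
  · exact h z hz hza

/-- A continuous linear map sends the closure of a span into a closed submodule as soon
as it sends the generators there. -/
theorem mem_of_closure_span {E : Type*} [NormedAddCommGroup E] [NormedSpace ℂ E]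
    (T : H →L[ℂ] E) {s : Set H} {M : Submodule ℂ E} (hM : IsClosed (M : Set E))
    (hT : ∀ x ∈ s, T x ∈ M) {g : H}
    (hg : g ∈ (Submodule.span ℂ s).topologicalClosure) : T g ∈ M := by
  have hle : (Submodule.span ℂ s).topologicalClosure ≤ M.comap (T : H →ₗ[ℂ] E) := by
    apply Submodule.topologicalClosure_minimal
    · rw [Submodule.span_le]; exact fun x hx => hT x hx
    · exact hM.preimage T.continuous
  exact hle hg

theorem ι_pow_S : ∀ (n : ℕ) (g : H), ∀ z ∈ Ω, F.ι ((F.S ^ n) g) z = z ^ n * F.ι g z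
  | 0, g, z, hz => by simp
  | (n+1), g, z, hz => by
      have h1 : (F.S ^ (n+1)) g = (F.S ^ n) (F.S g) := by
        rw [pow_succ]; rfl
      rw [h1, ι_pow_S n (F.S g) z hz, F.ι_S g z hz]; ring

theorem Q0_S (g : H) : F.Q 0 (F.S g) = g := by
  apply F.ext_off_s12 F.zero_mem
  intro z hz hz0
  rw [F.ι_Q 0 F.zero_mem (F.S g) z hz hz0, F.ι_S g z hz, F.ι_S g 0 F.zero_mem]
  field_simp
  ring


theorem zspan_eval_zero {f g : H} (hg : g ∈ F.zspan f) : F.ι g 0 = 0 := by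
  have h0 := F.reproducing 0 F.zero_mem g
  have hmem : (innerSL ℂ (F.k 0)) g ∈ (⊥ : Submodule ℂ ℂ) := by
    refine mem_of_closure_span (innerSL ℂ (F.k 0)) ?_ ?_ hg
    · rw [Submodule.bot_coe]; exact isClosed_singleton
    · rintro x ⟨n, hn, rfl⟩
      rw [Submodule.mem_bot]
      have : (innerSL ℂ (F.k 0)) ((F.S ^ n) f) = F.ι ((F.S ^ n) f) 0 :=
        F.reproducing 0 F.zero_mem _
      rw [this, F.ι_pow_S n f 0 F.zero_mem, zero_pow (by omega), zero_mul]
  rw [Submodule.mem_bot] at hmem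
  rw [← h0]
  exact hmem

theorem zspan_le_fullSpan (f : H) : F.zspan f ≤ F.fullSpan f := by
  apply Submodule.topologicalClosure_mono
  apply Submodule.span_mono
  rintro x ⟨n, hn, rfl⟩
  exact ⟨n, rfl⟩

theorem self_mem_fullSpan (f : H) : f ∈ F.fullSpan f :=
  Submodule.le_topologicalClosure _ (Submodule.subset_span ⟨0, by simp⟩)

theorem S_mem_zspan {f g : H} (hg : g ∈ F.fullSpan f) : F.S g ∈ F.zspan f := by
  refine mem_of_closure_span F.S (Submodule.isClosed_topologicalClosure _) ?_ hg
  rintro x ⟨n, rfl⟩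
  have : F.S ((F.S ^ n) f) = (F.S ^ (n+1)) f := by rw [pow_succ']; rfl
  rw [this]
  exact Submodule.le_topologicalClosure _
    (Submodule.subset_span ⟨n+1, Nat.succ_le_succ (Nat.zero_le n), rfl⟩)

theorem J_mem_fullSpan (f : H) : F.J f ∈ F.fullSpan f := by
  rw [RKFramework.J]
  exact Submodule.sub_mem _ (F.self_mem_fullSpan f)
    (F.zspan_le_fullSpan f (SetLike.coe_mem _))

theorem inner_J_zero {f g : H} (hg : g ∈ F.zspan f) : ⟪g, F.J f⟫ = 0 :=
  (Submodule.mem_orthogonal _ _).mp (Submodule.sub_starProjection_mem_orthogonal (K := F.zspan f) f) g hg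
theorem Qw_mem_fullSpan {f g : H} {w : ℂ} (hw : w ∈ Ω) (hfw : F.ι f w ≠ 0)
    (hg : g ∈ F.fullSpan f) (hgw : F.ι g w = 0) : F.Q w g ∈ F.fullSpan f := by
  set T : H →L[ℂ] H :=
    F.Q w - (F.ι f w)⁻¹ • ((innerSL ℂ (F.k w)).smulRight (F.Q w f)) with hT
  have hTg : T g = F.Q w g := by
    have hk : (innerSL ℂ (F.k w)) g = F.ι g w := F.reproducing w hw g
    simp [hT, ContinuousLinearMap.sub_apply, ContinuousLinearMap.smul_apply,
      ContinuousLinearMap.smulRight_apply, hk, hgw]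
  rw [← hTg]
  refine mem_of_closure_span T (Submodule.isClosed_topologicalClosure _) ?_ hg
  rintro x ⟨n, rfl⟩
  have key : T ((F.S ^ n) f) =
      ∑ i ∈ Finset.range n, (w ^ (n - 1 - i)) • ((F.S ^ i) f) := by
    apply F.ext_off_s12 hw
    intro z hz hzw
    have hk : (innerSL ℂ (F.k w)) ((F.S ^ n) f) = F.ι ((F.S ^ n) f) w :=
      F.reproducing w hw _
    have hsum : F.ι (∑ i ∈ Finset.range n, (w ^ (n - 1 - i)) • ((F.S ^ i) f)) z
        = ∑ i ∈ Finset.range n, (w ^ (n - 1 - i)) * (z ^ i * F.ι f z) := by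
      rw [map_sum]
      rw [Finset.sum_apply]
      refine Finset.sum_congr rfl fun i _ => ?_
      rw [map_smul, Pi.smul_apply, smul_eq_mul, F.ι_pow_S i f z hz]
    have hTx : F.ι (T ((F.S ^ n) f)) z =
        F.ι (F.Q w ((F.S ^ n) f)) z
          - (F.ι f w)⁻¹ * ((F.ι ((F.S ^ n) f) w) * F.ι (F.Q w f) z) := by
      simp only [hT, ContinuousLinearMap.sub_apply, ContinuousLinearMap.smul_apply,
        ContinuousLinearMap.smulRight_apply, hk, map_sub, map_smul, Pi.sub_apply,
        Pi.smul_apply, smul_eq_mul]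
    rw [hTx, hsum, F.ι_Q w hw _ z hz hzw, F.ι_Q w hw f z hz hzw,
      F.ι_pow_S n f z hz, F.ι_pow_S n f w hw]
    have hgeom : (∑ i ∈ Finset.range n, z ^ i * w ^ (n - 1 - i)) * (z - w)
        = z ^ n - w ^ n := geom_sum₂_mul z w n
    have hsum2 : ∑ i ∈ Finset.range n, (w ^ (n - 1 - i)) * (z ^ i * F.ι f z)
        = (∑ i ∈ Finset.range n, z ^ i * w ^ (n - 1 - i)) * F.ι f z := by
      rw [Finset.sum_mul]
      exact Finset.sum_congr rfl fun i _ => by ring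
    rw [hsum2]
    have hzw' : z - w ≠ 0 := sub_ne_zero.mpr hzw
    have h1 : (F.ι f w)⁻¹ * ((w ^ n * F.ι f w) * ((F.ι f z - F.ι f w) / (z - w)))
        = (w ^ n * (F.ι f z - F.ι f w)) / (z - w) := by
      field_simp
    rw [h1, div_sub_div_same, div_eq_iff hzw']
    linear_combination (-(F.ι f z)) * hgeom
  rw [key]
  exact Submodule.le_topologicalClosure _
    (Submodule.sum_mem _ fun i _ => Submodule.smul_mem _ _ (Submodule.subset_span ⟨i, rfl⟩))
theorem eq_S_Q0 {g : H} (hg0 : F.ι g 0 = 0) : g = F.S (F.Q 0 g) := by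
  apply F.ext_off_s12 F.zero_mem
  intro z hz hz0
  rw [F.ι_S _ z hz, F.ι_Q 0 F.zero_mem g z hz hz0, hg0]
  field_simp
  ring

theorem descend {g : H} (hg : g ∈ F.zspan g) :
    g = F.S (F.Q 0 g) ∧ F.Q 0 g ∈ F.zspan (F.Q 0 g) := by
  have hg0 : F.ι g 0 = 0 := F.zspan_eval_zero hg
  have hS : g = F.S (F.Q 0 g) := F.eq_S_Q0 hg0
  refine ⟨hS, ?_⟩
  refine mem_of_closure_span (F.Q 0) (Submodule.isClosed_topologicalClosure _) ?_ hg
  rintro x ⟨n, hn, rfl⟩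
  obtain ⟨m, rfl⟩ : ∃ m, n = m + 1 := ⟨n - 1, by omega⟩
  have h1 : (F.S ^ (m+1)) g = F.S ((F.S ^ m) g) := by rw [pow_succ']; rfl
  have h2 : F.Q 0 ((F.S ^ (m+1)) g) = (F.S ^ m) g := by rw [h1, F.Q0_S]
  rw [h2]
  have h3 : (F.S ^ m) g = (F.S ^ (m+1)) (F.Q 0 g) := by
    conv_lhs => rw [hS]
    rw [pow_succ]; rfl
  rw [h3]
  exact Submodule.le_topologicalClosure _
    (Submodule.subset_span ⟨m+1, Nat.succ_le_succ (Nat.zero_le m), rfl⟩)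

theorem iter_div {f : H} (hf : f ∈ F.zspan f) :
    ∀ n : ℕ, ((F.Q 0) ^ n) f ∈ F.zspan (((F.Q 0) ^ n) f) ∧ f = (F.S ^ n) (((F.Q 0) ^ n) f)
  | 0 => ⟨by simpa using hf, by simp⟩
  | (n+1) => by
      obtain ⟨h1, h2⟩ := iter_div hf n
      have hq : ((F.Q 0) ^ (n+1)) f = F.Q 0 (((F.Q 0) ^ n) f) := by
        rw [pow_succ']; rfl
      obtain ⟨hS, hz⟩ := F.descend h1
      constructor
      · rw [hq]; exact hz
      · rw [hq]
        have : (F.S ^ (n+1)) (F.Q 0 (((F.Q 0) ^ n) f))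
            = (F.S ^ n) (F.S (F.Q 0 (((F.Q 0) ^ n) f))) := by rw [pow_succ]; rfl
        rw [this, ← hS]
        exact h2

theorem norm_Q0_pow_le (f : H) : ∀ n : ℕ, ‖((F.Q 0) ^ n) f‖ ≤ ‖F.Q 0‖ ^ n * ‖f‖
  | 0 => by simp
  | (n+1) => by
      have hq : ((F.Q 0) ^ (n+1)) f = F.Q 0 (((F.Q 0) ^ n) f) := by rw [pow_succ']; rfl
      rw [hq]
      calc ‖F.Q 0 (((F.Q 0) ^ n) f)‖ ≤ ‖F.Q 0‖ * ‖((F.Q 0) ^ n) f‖ :=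
            (F.Q 0).le_opNorm _
        _ ≤ ‖F.Q 0‖ * (‖F.Q 0‖ ^ n * ‖f‖) := by
            exact mul_le_mul_of_nonneg_left (norm_Q0_pow_le f n) (norm_nonneg _)
        _ = ‖F.Q 0‖ ^ (n+1) * ‖f‖ := by ring

theorem not_mem_zspan_self {f : H} (hf : f ≠ 0) : f ∉ F.zspan f := by
  intro hmem
  obtain ⟨r, hr, hball⟩ := Metric.isOpen_iff.mp F.isOpen 0 F.zero_mem
  set ε : ℝ := min r (1 / (‖F.Q 0‖ + 1)) with hε
  have hQpos : (0:ℝ) < ‖F.Q 0‖ + 1 := by positivity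
  have hεpos : 0 < ε := lt_min hr (by positivity)
  have hzero : Set.EqOn (F.ι f) 0 (Metric.ball (0:ℂ) ε) := by
    intro z hz
    have hzΩ : z ∈ Ω := hball (Metric.ball_subset_ball (min_le_left _ _) hz)
    have hzn : ‖z‖ < 1 / (‖F.Q 0‖ + 1) := by
      have := Metric.mem_ball.mp hz
      simpa [Complex.dist_eq] using lt_of_lt_of_le this (min_le_right _ _)
    have ht1 : ‖z‖ * ‖F.Q 0‖ < 1 := by
      have h1 : ‖z‖ * (‖F.Q 0‖ + 1) < 1 := (lt_div_iff₀ hQpos).mp hzn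
      nlinarith [norm_nonneg z]
    set t : ℝ := ‖z‖ * ‖F.Q 0‖ with htdef
    have ht0 : 0 ≤ t := by positivity
    have hb : ∀ n : ℕ, ‖F.ι f z‖ ≤ t ^ n * (‖F.k z‖ * ‖f‖) := by
      intro n
      obtain ⟨h1, h2⟩ := F.iter_div hmem n
      have heval : F.ι f z = z ^ n * F.ι (((F.Q 0) ^ n) f) z := by
        conv_lhs => rw [h2]
        exact F.ι_pow_S n _ z hzΩ
      have hrep : F.ι (((F.Q 0) ^ n) f) z = ⟪F.k z, ((F.Q 0) ^ n) f⟫ :=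
        (F.reproducing z hzΩ _).symm
      have hcs : ‖F.ι (((F.Q 0) ^ n) f) z‖ ≤ ‖F.k z‖ * ‖((F.Q 0) ^ n) f‖ := by
        rw [hrep]
        exact norm_inner_le_norm _ _
      calc ‖F.ι f z‖ = ‖z‖ ^ n * ‖F.ι (((F.Q 0) ^ n) f) z‖ := by
            rw [heval, norm_mul, norm_pow]
        _ ≤ ‖z‖ ^ n * (‖F.k z‖ * (‖F.Q 0‖ ^ n * ‖f‖)) := by
            refine mul_le_mul_of_nonneg_left ?_ (by positivity)
            exact hcs.trans (mul_le_mul_of_nonneg_left (F.norm_Q0_pow_le f n) (norm_nonneg _))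
        _ = t ^ n * (‖F.k z‖ * ‖f‖) := by rw [htdef, mul_pow]; ring
    have htend : Filter.Tendsto (fun n : ℕ => t ^ n * (‖F.k z‖ * ‖f‖)) Filter.atTop (𝓝 0) := by
      have := (tendsto_pow_atTop_nhds_zero_of_lt_one ht0 ht1).mul_const (‖F.k z‖ * ‖f‖)
      simpa using this
    have habs : ‖F.ι f z‖ ≤ 0 := ge_of_tendsto' htend hb
    have : ‖F.ι f z‖ = 0 := le_antisymm habs (norm_nonneg _)
    simpa using this
  have hEq : F.ι f =ᶠ[𝓝 (0:ℂ)] 0 :=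
    Filter.eventuallyEq_of_mem (Metric.ball_mem_nhds 0 hεpos) hzero
  have hAn : AnalyticOnNhd ℂ (F.ι f) Ω := (F.analytic f).analyticOnNhd F.isOpen
  have hEqOn : Set.EqOn (F.ι f) 0 Ω :=
    hAn.eqOn_zero_of_preconnected_of_eventuallyEq_zero F.isConnected.isPreconnected
      F.zero_mem hEq
  apply hf
  apply F.ι_inj f 0
  intro z hz
  rw [map_zero]
  exact hEqOn hz

theorem J_ne_zero {f : H} (hf : f ≠ 0) : F.J f ≠ 0 := by
  intro hJ
  rw [RKFramework.J, sub_eq_zero] at hJ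
  exact F.not_mem_zspan_self hf (Set.mem_of_eq_of_mem hJ (SetLike.coe_mem _))
end RKFramework

theorem numeric_aux (a b c r q0 qw s : ℝ) (ha0 : 0 < a) (hb0 : 0 < b) (hc0 : 0 ≤ c)
    (hr0 : 0 < r) (hq00 : 0 ≤ q0) (hqw0 : 0 ≤ qw) (hs0 : 0 ≤ s)
    (h1 : r^2 * b^2 = r^2 * c^2 + a^2) (h2 : b ≤ q0 * (r * c)) (h3 : b ≤ qw * a)
    (h4 : 1 ≤ q0 * s) : 1 + s^2 * qw^2 ≤ (r * (q0 * (s * qw)))^2 := by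
  have hq0pos : 0 < q0 := by nlinarith
  have step1 : b^2 ≤ q0^2 * r^2 * c^2 := by
    nlinarith [h2, hb0.le, mul_nonneg hq00 (mul_nonneg hr0.le hc0)]
  have e1 : q0^2 * a^2 ≤ (q0^2 * r^2 - 1) * b^2 := by nlinarith [step1, h1, sq_nonneg q0]
  have h6 : 0 < q0^2 * r^2 - 1 := by
    nlinarith [e1, mul_pos (pow_pos hq0pos 2) (pow_pos ha0 2), sq_nonneg b]
  have h3' : b^2 ≤ qw^2 * a^2 := by nlinarith [h3, hb0.le, mul_nonneg hqw0 ha0.le]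
  have h7 : q0^2 + qw^2 ≤ q0^2 * r^2 * qw^2 := by
    nlinarith [e1, mul_le_mul_of_nonneg_left h3' h6.le, pow_pos ha0 2]
  nlinarith [h7, h4, sq_nonneg s, mul_nonneg hq00 hs0, sq_nonneg (s*qw), sq_nonneg (s*q0),
    mul_le_mul_of_nonneg_left h7 (sq_nonneg s)]


theorem stmt12' (F : RKFramework Ω H) (f : H) (hf : f ≠ 0)
    (w : ℂ) (hwΩ : w ∈ Ω) (hw0 : w ≠ 0)
    (hJw : F.ι (F.J f) w = 0) (hfw : F.ι f w ≠ 0) :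
    Real.sqrt (1 + ‖F.S‖ ^ 2 * ‖F.Q w‖ ^ 2) ≤
      ‖w‖ * (‖F.Q 0‖ * (‖F.S‖ * ‖F.Q w‖)) := by
  classical
  set J := F.J f with hJdef
  have hJne : J ≠ 0 := F.J_ne_zero hf
  set h := F.Q w J with hhdef
  have hJ_eq : F.S h - w • h = J := by
    apply F.ext_off_s12 hwΩ
    intro z hz hzw
    have hzw' : z - w ≠ 0 := sub_ne_zero.mpr hzw
    rw [map_sub, map_smul, Pi.sub_apply, Pi.smul_apply, smul_eq_mul,
      F.ι_S h z hz, hhdef, F.ι_Q w hwΩ J z hz hzw, hJw]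
    field_simp
    ring
  have hhne : h ≠ 0 := by
    intro h0
    apply hJne
    rw [← hJ_eq, h0, map_zero, smul_zero, sub_zero]
  have hhfull : h ∈ F.fullSpan f := F.Qw_mem_fullSpan hwΩ hfw (F.J_mem_fullSpan f) hJw
  have hSh_z : F.S h ∈ F.zspan f := F.S_mem_zspan hhfull
  have hinner : ⟪F.S h, J⟫ = 0 := F.inner_J_zero hSh_z
  have hinner' : ⟪J, F.S h⟫ = 0 := inner_eq_zero_symm.mp hinner
  have hJJ : ⟪J, J⟫ = - (w * ⟪J, h⟫) := by
    have e : ⟪J, F.S h - w • h⟫ = ⟪J, F.S h⟫ - w * ⟪J, h⟫ := by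
      rw [inner_sub_right, inner_smul_right]
    rw [hJ_eq, hinner', zero_sub] at e
    exact e
  set u := h + w⁻¹ • J with hudef
  have hu_inner : ⟪J, u⟫ = 0 := by
    rw [hudef, inner_add_right, inner_smul_right, hJJ]
    field_simp
    ring
  have huJ : ⟪u, J⟫ = 0 := inner_eq_zero_symm.mp hu_inner
  have hwu : w • u = F.S h := by
    rw [hudef, smul_add, smul_smul, mul_inv_cancel₀ hw0, one_smul, ← hJ_eq]
    abel
  have hwh : w • h = w • u - J := by
    rw [hwu, ← hJ_eq]
    abel
  -- real quantities
  set a : ℝ := ‖J‖ with hadef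
  set b : ℝ := ‖h‖ with hbdef
  set c : ℝ := ‖u‖ with hcdef
  set r : ℝ := ‖w‖ with hrdef
  set q0 : ℝ := ‖F.Q 0‖ with hq0def
  set qw : ℝ := ‖F.Q w‖ with hqwdef
  set s : ℝ := ‖F.S‖ with hsdef
  have hr0 : 0 < r := by
    rw [hrdef]
    exact norm_pos_iff.mpr hw0
  have ha0 : 0 < a := norm_pos_iff.mpr hJne
  have hb0 : 0 < b := norm_pos_iff.mpr hhne
  have hc0 : 0 ≤ c := norm_nonneg _
  have hq00 : 0 ≤ q0 := norm_nonneg _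
  have hqw0 : 0 ≤ qw := norm_nonneg _
  have hs0 : 0 ≤ s := norm_nonneg _
  -- (1): r² b² = r² c² + a²
  have h1 : r^2 * b^2 = r^2 * c^2 + a^2 := by
    have e2 : ‖w • u - J‖^2 = ‖w • u‖^2 - 2 * RCLike.re ⟪w • u, J⟫ + ‖J‖^2 :=
      @norm_sub_sq ℂ _ _ _ _ _ _
    have e3 : ⟪w • u, J⟫ = (0:ℂ) := by rw [inner_smul_left, huJ, mul_zero]
    have e1 : ‖w • h‖^2 = ‖w • u - J‖^2 := by rw [hwh]
    rw [e2, e3] at e1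
    have e4 : ‖w • h‖ = r * b := by rw [hbdef, norm_smul]
    have e5 : ‖w • u‖ = r * c := by rw [hcdef, norm_smul]
    rw [e4, e5] at e1
    simp only [map_zero, mul_zero, sub_zero] at e1
    rw [hadef]
    nlinarith [e1]
  -- (2): b ≤ q0 * (r * c)
  have h2 : b ≤ q0 * (r * c) := by
    have e1 : h = F.Q 0 (F.S h) := (F.Q0_S h).symm
    calc b = ‖F.Q 0 (F.S h)‖ := by rw [hbdef]; exact congrArg _ e1
      _ ≤ q0 * ‖F.S h‖ := (F.Q 0).le_opNorm _
      _ = q0 * (r * c) := by rw [← hwu, norm_smul]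
  -- (3): b ≤ qw * a
  have h3 : b ≤ qw * a := (F.Q w).le_opNorm _
  -- (4): 1 ≤ q0 * s
  haveI : Nontrivial H := nontrivial_of_ne f 0 hf
  have h4 : 1 ≤ q0 * s := by
    have hid : (F.Q 0).comp F.S = ContinuousLinearMap.id ℂ H := by
      apply ContinuousLinearMap.ext
      intro x
      exact F.Q0_S x
    calc (1:ℝ) = ‖ContinuousLinearMap.id ℂ H‖ := ContinuousLinearMap.norm_id.symm
      _ = ‖(F.Q 0).comp F.S‖ := by rw [hid]
      _ ≤ q0 * s := ContinuousLinearMap.opNorm_comp_le _ _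
  have hfinal : 1 + s^2 * qw^2 ≤ (r * (q0 * (s * qw)))^2 :=
    numeric_aux a b c r q0 qw s ha0 hb0 hc0 hr0 hq00 hqw0 hs0 h1 h2 h3 h4
  have hrhs : 0 ≤ r * (q0 * (s * qw)) := by positivity
  calc Real.sqrt (1 + s^2 * qw^2) ≤ Real.sqrt ((r * (q0 * (s * qw)))^2) :=
        Real.sqrt_le_sqrt hfinal
    _ = r * (q0 * (s * qw)) := Real.sqrt_sq hrhs

/-- Theorem 5.1: any extra zero `w ≠ 0` of the `S`-inner function `J = f − P_{[zf]} f`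
(i.e. a zero of `J` that is not a zero of `f`) satisfies
`|w| ≥ √(1 + ‖S‖²‖Q_w‖²) / (‖Q₀‖‖S‖‖Q_w‖)`. -/
theorem stmt12 (F : RKFramework Ω H) (f : H) (hf : f ≠ 0)
    (w : ℂ) (hwΩ : w ∈ Ω) (hw0 : w ≠ 0)
    (hJw : F.ι (F.J f) w = 0) (hfw : F.ι f w ≠ 0) :
    Real.sqrt (1 + ‖F.S‖ ^ 2 * ‖F.Q w‖ ^ 2) ≤
      ‖w‖ * (‖F.Q 0‖ * (‖F.S‖ * ‖F.Q w‖)) := by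
  exact stmt12' F f hf w hwΩ hw0 hJw hfw
end
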